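/- Numerical convergence of the fixed-point iteration: let h : ℕ×ℕ → ℝ with h(i,j) ≥ 0 for all i, j, h(0,0) = 0 and h(0,1) = 0, and let S(z) = ∑_n s_n z^n be the unique formal power series with s_0 = 0 satisfying S = H(z,S), where H(z,y) = ∑_{i,j} h(i,j) z^i y^j (the coefficients s_n are then nonnegative). Let α ≥ 0 and assume there exists r > α such that ∑_n s_n r^n converges. Then the sequence of reals defined by y_0 = 0 and y_{p+1} = ∑_{i,j} h(i,j) α^i y_p^j is well defined — for every p the family (h(i,j)·α^i·y_p^j)_{(i,j)} is summable — and converges to S(α) := ∑_n s_n α^n. -/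

import Mathlib

/-- Substitution of a family `s` of one-variable formal power series (each intended to have
zero constant coefficient) into a multivariate formal power series `H` in `k` variables:
the coefficient of `z^n` in `H(s)` is the (finite) sum over all monomials `d` of the
coefficient of `d` in `H` times the coefficient of `z^n` in `∏ j, (s j) ^ (d j)`.
When every `s j` has zero constant coefficient, only monomials `d` with
`∑ j, d j ≤ n` (in particular `d ≤ (n, …, n)`) can contribute, so this is the usual
well-defined substitution. -/
noncomputable def mvSubst {R : Type*} [CommSemiring R] {k : ℕ}
    (H : MvPowerSeries (Fin k) R) (s : Fin k → PowerSeries R) : PowerSeries R :=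
  PowerSeries.mk fun n =>
    ∑ d ∈ Finset.Iic (Finsupp.equivFunOnFinite.symm fun _ : Fin k => n),
      MvPowerSeries.coeff d H * PowerSeries.coeff n (∏ j, (s j) ^ (d j))

/-- The two-variable formal power series `H(z,y) = ∑ h(i,j) z^i y^j` attached to a
coefficient family `h : ℕ × ℕ → ℝ`; the variable `0` is `z` and the variable `1` is `y`. -/
noncomputable def toMv (h : ℕ × ℕ → ℝ) : MvPowerSeries (Fin 2) ℝ :=
  fun d => h (d 0, d 1)

open PowerSeries Finset ENNReal Filter

lemma fpnc_coeff_pow_zero (σ : ℕ → ℝ) (h0 : σ 0 = 0) :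
    ∀ j m, m < j → PowerSeries.coeff m ((PowerSeries.mk σ) ^ j) = 0 := by
  intro j
  induction j with
  | zero => omega
  | succ j ih =>
    intro m hm
    rw [pow_succ, coeff_mul]
    apply Finset.sum_eq_zero
    rintro ⟨a, b⟩ hab
    rw [Finset.HasAntidiagonal.mem_antidiagonal] at hab
    simp only
    by_cases ha : a < j
    · rw [ih a ha, zero_mul]
    · have hb : b = 0 := by omega
      rw [hb, coeff_zero_eq_constantCoeff]
      simp [h0, constantCoeff_mk]

lemma fpnc_coeff_pow_nonneg (σ : ℕ → ℝ) (hσ : ∀ k, 0 ≤ σ k) :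
    ∀ j m, 0 ≤ PowerSeries.coeff m ((PowerSeries.mk σ) ^ j) := by
  intro j
  induction j with
  | zero => intro m; rw [pow_zero, coeff_one]; positivity
  | succ j ih =>
    intro m
    rw [pow_succ, coeff_mul]
    apply Finset.sum_nonneg
    rintro ⟨a, b⟩ _
    exact mul_nonneg (ih a) (by simpa using hσ b)

lemma fpnc_coeff_pow_congr (σ τ : ℕ → ℝ) (hσ0 : σ 0 = 0) (hτ0 : τ 0 = 0) (K : ℕ)
    (hag : ∀ k ≤ K, σ k = τ k) :
    ∀ j m, 1 ≤ j → m + 1 ≤ K + j →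
      PowerSeries.coeff m ((PowerSeries.mk σ) ^ j) =
        PowerSeries.coeff m ((PowerSeries.mk τ) ^ j) := by
  intro j
  induction j with
  | zero => omega
  | succ j ih =>
    intro m _ hm
    by_cases hj : j = 0
    · subst hj
      rw [pow_one, pow_one, coeff_mk, coeff_mk]
      exact hag m (by omega)
    rw [pow_succ, pow_succ, coeff_mul, coeff_mul]
    apply Finset.sum_congr rfl
    rintro ⟨a, b⟩ hab
    rw [Finset.HasAntidiagonal.mem_antidiagonal] at hab
    simp only [coeff_mk]
    by_cases hb : b = 0
    · rw [hb, hσ0, hτ0]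
      rw [mul_zero, mul_zero]
    by_cases ha : a < j
    · rw [fpnc_coeff_pow_zero σ hσ0 j a ha, fpnc_coeff_pow_zero τ hτ0 j a ha,
        zero_mul, zero_mul]
    · rw [ih a (by omega) (by omega), hag b (by omega)]

lemma fpnc_coeff_X_pow_mul (P : PowerSeries ℝ) (i n : ℕ) :
    PowerSeries.coeff n (PowerSeries.X ^ i * P) =
      if i ≤ n then PowerSeries.coeff (n - i) P else 0 := by
  split
  · next hin =>
      rw [show n = (n - i) + i by omega, coeff_X_pow_mul, Nat.add_sub_cancel]
  · next hin =>
    rw [coeff_mul]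
    apply Finset.sum_eq_zero
    rintro ⟨a, b⟩ hab
    rw [Finset.HasAntidiagonal.mem_antidiagonal] at hab
    rw [coeff_X_pow, if_neg (by omega), zero_mul]

lemma fpnc_hfix_coeff (h : ℕ × ℕ → ℝ) (s : ℕ → ℝ)
    (hfix : PowerSeries.mk s = mvSubst (toMv h) ![PowerSeries.X, PowerSeries.mk s]) (n : ℕ) :
    s n = ∑ p ∈ Finset.range (n + 1) ×ˢ Finset.range (n + 1),
      h p * PowerSeries.coeff n (PowerSeries.X ^ p.1 * (PowerSeries.mk s) ^ p.2) := by
  have := congrArg (PowerSeries.coeff n) hfix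
  rw [coeff_mk] at this
  rw [this]
  unfold mvSubst
  rw [coeff_mk]
  refine Finset.sum_nbij' (fun d => (d 0, d 1))
    (fun p => Finsupp.equivFunOnFinite.symm ![p.1, p.2]) ?_ ?_ ?_ ?_ ?_
  · intro d hd
    rw [Finset.mem_Iic] at hd
    have h0 := hd 0
    have h1 := hd 1
    simp only [Finsupp.coe_equivFunOnFinite_symm] at h0 h1
    simp only [Finset.mem_product, Finset.mem_range]
    omega
  · intro p hp
    simp only [Finset.mem_product, Finset.mem_range] at hp
    rw [Finset.mem_Iic]
    intro x
    simp only [Finsupp.coe_equivFunOnFinite_symm]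
    fin_cases x <;> simp <;> omega
  · intro d _
    apply Finsupp.equivFunOnFinite.symm.apply_eq_iff_eq_symm_apply.mpr ?_
    ext x
    fin_cases x <;> simp
  · intro p _
    simp
  · intro d hd
    have hprod : (∏ j : Fin 2, ![PowerSeries.X, PowerSeries.mk s] j ^ d j) =
        PowerSeries.X ^ d 0 * (PowerSeries.mk s) ^ d 1 := by
      rw [Fin.prod_univ_two]; simp
    rw [hprod]
    rfl

lemma fpnc_s_nonneg (h : ℕ × ℕ → ℝ) (hpos : ∀ p, 0 ≤ h p)
    (h01 : h (0, 1) = 0) (s : ℕ → ℝ) (hs0 : s 0 = 0)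
    (hcoeff : ∀ n, s n = ∑ p ∈ Finset.range (n + 1) ×ˢ Finset.range (n + 1),
      h p * PowerSeries.coeff n (PowerSeries.X ^ p.1 * (PowerSeries.mk s) ^ p.2)) :
    ∀ n, 0 ≤ s n := by
  intro n
  induction n using Nat.strong_induction_on with
  | _ n ih =>
  rw [hcoeff n]
  apply Finset.sum_nonneg
  rintro ⟨i, j⟩ hp
  simp only [Finset.mem_product, Finset.mem_range] at hp
  by_cases hij : (i, j) = (0, 1)
  · rw [hij, h01, zero_mul]
  apply mul_nonneg (hpos _)
  dsimp only
  rw [fpnc_coeff_X_pow_mul]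
  split
  · next hin =>
    set t : ℕ → ℝ := fun k => if k < n then s k else 0 with ht
    have ht0 : t 0 = 0 := by
      simp only [ht]; split <;> simp [hs0]
    have htnn : ∀ k, 0 ≤ t k := by
      intro k; simp only [ht]; split
      · exact ih k (by omega)
      · exact le_refl 0

    rcases Nat.eq_zero_or_pos j with hj | hj
    · subst hj
      rw [pow_zero, coeff_one]
      split <;> norm_num
    · have heq : PowerSeries.coeff (n - i) ((PowerSeries.mk s) ^ j) =
          PowerSeries.coeff (n - i) ((PowerSeries.mk t) ^ j) := by
        apply fpnc_coeff_pow_congr s t hs0 ht0 (n - 1) _ j (n - i) hj _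
        · intro k hk
          simp only [ht]
          rcases Nat.eq_zero_or_pos n with h0 | h0
          · subst h0; simp at hk; simp [hk, hs0]
          · rw [if_pos (by omega)]
        · have : ¬(i = 0 ∧ j = 1) := by
            intro ⟨h1, h2⟩; exact hij (by rw [h1, h2])
          omega
      rw [heq]
      exact fpnc_coeff_pow_nonneg t htnn j (n - i)
  · exact le_refl 0

lemma fpnc_enn_cauchy (f g : ℕ → ℝ≥0∞) :
    (∑' n, f n) * (∑' n, g n) = ∑' n, ∑ kl ∈ Finset.HasAntidiagonal.antidiagonal n, f kl.1 * g kl.2 := by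
  have h1 : (∑' p : ℕ × ℕ, f p.1 * g p.2) = (∑' n, f n) * (∑' n, g n) := by
    calc ∑' p : ℕ × ℕ, f p.1 * g p.2 = ∑' a, ∑' b, f a * g b :=
          ENNReal.tsum_prod (f := fun a b => f a * g b)
      _ = ∑' a, f a * ∑' b, g b := tsum_congr fun a => ENNReal.tsum_mul_left
      _ = (∑' n, f n) * (∑' n, g n) := ENNReal.tsum_mul_right
  rw [← h1, ← Finset.HasAntidiagonal.sigmaAntidiagonalEquivProd.tsum_eq (fun p : ℕ × ℕ => f p.1 * g p.2)]
  rw [ENNReal.tsum_sigma']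
  exact tsum_congr fun n => by
    rw [← Finset.tsum_subtype]
    rfl

lemma fpnc_pow_sum (σ : ℕ → ℝ) (hσ : ∀ k, 0 ≤ σ k) (β : ℝ) (hβ : 0 ≤ β) :
    ∀ j : ℕ, ∑' n : ℕ, ENNReal.ofReal (PowerSeries.coeff n ((PowerSeries.mk σ) ^ j)) *
        (ENNReal.ofReal β) ^ n
      = (∑' n : ℕ, ENNReal.ofReal (σ n) * (ENNReal.ofReal β) ^ n) ^ j := by
  intro j
  induction j with
  | zero =>
    rw [tsum_eq_single 0 (fun n hn => by
      rw [pow_zero, coeff_one, if_neg hn, ENNReal.ofReal_zero, zero_mul])]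
    rw [pow_zero, coeff_one, if_pos rfl, ENNReal.ofReal_one, pow_zero, mul_one, pow_zero]
  | succ j ih =>
    have hrhs : (∑' n : ℕ, ENNReal.ofReal (σ n) * (ENNReal.ofReal β) ^ n) ^ (j + 1)
        = ∑' n : ℕ, ∑ kl ∈ Finset.HasAntidiagonal.antidiagonal n,
            (ENNReal.ofReal (PowerSeries.coeff kl.1 ((PowerSeries.mk σ) ^ j)) *
              (ENNReal.ofReal β) ^ kl.1) * (ENNReal.ofReal (σ kl.2) * (ENNReal.ofReal β) ^ kl.2) := by
      rw [pow_succ, ← ih]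
      exact fpnc_enn_cauchy _ _
    rw [hrhs]
    apply tsum_congr
    intro n
    rw [pow_succ, coeff_mul]
    rw [ENNReal.ofReal_sum_of_nonneg (fun p _ =>
      mul_nonneg (fpnc_coeff_pow_nonneg σ hσ j p.1) (by simpa using hσ p.2))]
    rw [Finset.sum_mul]
    apply Finset.sum_congr rfl
    rintro ⟨a, b⟩ hab
    rw [Finset.HasAntidiagonal.mem_antidiagonal] at hab
    simp only [coeff_mk]
    rw [ENNReal.ofReal_mul (fpnc_coeff_pow_nonneg σ hσ j a), ← hab, pow_add]
    ring

lemma fpnc_master (h : ℕ × ℕ → ℝ) (σ : ℕ → ℝ) (hσ : ∀ k, 0 ≤ σ k) (β : ℝ) (hβ : 0 ≤ β) :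
    ∑' q : ℕ × ℕ, ENNReal.ofReal (h q) * (ENNReal.ofReal β) ^ q.1 *
        (∑' n : ℕ, ENNReal.ofReal (σ n) * (ENNReal.ofReal β) ^ n) ^ q.2
      = ∑' n : ℕ, (ENNReal.ofReal β) ^ n *
          ∑' q : ℕ × ℕ, ENNReal.ofReal (h q) *
            ENNReal.ofReal (PowerSeries.coeff n
              (PowerSeries.X ^ q.1 * (PowerSeries.mk σ) ^ q.2)) := by
  have key : ∀ q : ℕ × ℕ,
      (∑' n : ℕ, (ENNReal.ofReal β) ^ n * (ENNReal.ofReal (h q) *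
        ENNReal.ofReal (PowerSeries.coeff n (PowerSeries.X ^ q.1 * (PowerSeries.mk σ) ^ q.2))))
      = ENNReal.ofReal (h q) * (ENNReal.ofReal β) ^ q.1 *
          (∑' n : ℕ, ENNReal.ofReal (σ n) * (ENNReal.ofReal β) ^ n) ^ q.2 := by
    intro q
    have hre : (∑' m : ℕ, (ENNReal.ofReal β) ^ (m + q.1) * (ENNReal.ofReal (h q) *
        ENNReal.ofReal (PowerSeries.coeff (m + q.1)
          (PowerSeries.X ^ q.1 * (PowerSeries.mk σ) ^ q.2))))
        = ∑' n : ℕ, (ENNReal.ofReal β) ^ n * (ENNReal.ofReal (h q) *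
            ENNReal.ofReal (PowerSeries.coeff n
              (PowerSeries.X ^ q.1 * (PowerSeries.mk σ) ^ q.2))) := by
      have hinj : Function.Injective (fun m : ℕ => m + q.1) := by
        intro a b hab
        simpa using hab
      refine Function.Injective.tsum_eq (f := fun n : ℕ => (ENNReal.ofReal β) ^ n *
        (ENNReal.ofReal (h q) * ENNReal.ofReal (PowerSeries.coeff n
          (PowerSeries.X ^ q.1 * (PowerSeries.mk σ) ^ q.2)))) hinj ?_
      intro x hx
      rcases le_or_gt q.1 x with hle | hlt
      · exact ⟨x - q.1, by simp; omega⟩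
      · exfalso
        apply hx
        simp only
        rw [fpnc_coeff_X_pow_mul, if_neg (by omega)]
        simp
    rw [← hre]
    calc ∑' m : ℕ, (ENNReal.ofReal β) ^ (m + q.1) * (ENNReal.ofReal (h q) *
          ENNReal.ofReal (PowerSeries.coeff (m + q.1)
            (PowerSeries.X ^ q.1 * (PowerSeries.mk σ) ^ q.2)))
        = ∑' m : ℕ, (ENNReal.ofReal (h q) * (ENNReal.ofReal β) ^ q.1) *
            (ENNReal.ofReal (PowerSeries.coeff m ((PowerSeries.mk σ) ^ q.2)) *
              (ENNReal.ofReal β) ^ m) := by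
          apply tsum_congr
          intro m
          rw [fpnc_coeff_X_pow_mul, if_pos (by omega), Nat.add_sub_cancel, pow_add]
          ring
      _ = (ENNReal.ofReal (h q) * (ENNReal.ofReal β) ^ q.1) *
            ∑' m : ℕ, ENNReal.ofReal (PowerSeries.coeff m ((PowerSeries.mk σ) ^ q.2)) *
              (ENNReal.ofReal β) ^ m := ENNReal.tsum_mul_left
      _ = ENNReal.ofReal (h q) * (ENNReal.ofReal β) ^ q.1 *
            (∑' n : ℕ, ENNReal.ofReal (σ n) * (ENNReal.ofReal β) ^ n) ^ q.2 := by
          rw [fpnc_pow_sum σ hσ β hβ]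
  calc ∑' q : ℕ × ℕ, ENNReal.ofReal (h q) * (ENNReal.ofReal β) ^ q.1 *
        (∑' n : ℕ, ENNReal.ofReal (σ n) * (ENNReal.ofReal β) ^ n) ^ q.2
      = ∑' q : ℕ × ℕ, ∑' n : ℕ, (ENNReal.ofReal β) ^ n * (ENNReal.ofReal (h q) *
          ENNReal.ofReal (PowerSeries.coeff n
            (PowerSeries.X ^ q.1 * (PowerSeries.mk σ) ^ q.2))) :=
        tsum_congr fun q => (key q).symm
    _ = ∑' n : ℕ, ∑' q : ℕ × ℕ, (ENNReal.ofReal β) ^ n * (ENNReal.ofReal (h q) *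
          ENNReal.ofReal (PowerSeries.coeff n
            (PowerSeries.X ^ q.1 * (PowerSeries.mk σ) ^ q.2))) := ENNReal.tsum_comm
    _ = ∑' n : ℕ, (ENNReal.ofReal β) ^ n *
          ∑' q : ℕ × ℕ, ENNReal.ofReal (h q) *
            ENNReal.ofReal (PowerSeries.coeff n
              (PowerSeries.X ^ q.1 * (PowerSeries.mk σ) ^ q.2)) :=
        tsum_congr fun n => ENNReal.tsum_mul_left

lemma fpnc_G (h : ℕ × ℕ → ℝ) (hpos : ∀ p, 0 ≤ h p) (s : ℕ → ℝ) (hs0 : s 0 = 0)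
    (hsnn : ∀ k, 0 ≤ s k)
    (hcoeff : ∀ n, s n = ∑ p ∈ Finset.range (n + 1) ×ˢ Finset.range (n + 1),
      h p * PowerSeries.coeff n (PowerSeries.X ^ p.1 * (PowerSeries.mk s) ^ p.2)) (n : ℕ) :
    ∑' q : ℕ × ℕ, ENNReal.ofReal (h q) *
        ENNReal.ofReal (PowerSeries.coeff n (PowerSeries.X ^ q.1 * (PowerSeries.mk s) ^ q.2))
      = ENNReal.ofReal (s n) := by
  rw [tsum_eq_sum (s := Finset.range (n + 1) ×ˢ Finset.range (n + 1)) ?_]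
  · have : ∀ q ∈ Finset.range (n + 1) ×ˢ Finset.range (n + 1),
        ENNReal.ofReal (h q) * ENNReal.ofReal (PowerSeries.coeff n
          (PowerSeries.X ^ q.1 * (PowerSeries.mk s) ^ q.2))
        = ENNReal.ofReal (h q * PowerSeries.coeff n
            (PowerSeries.X ^ q.1 * (PowerSeries.mk s) ^ q.2)) := by
      intro q _
      rw [ENNReal.ofReal_mul (hpos q)]
    rw [Finset.sum_congr rfl this,
      ← ENNReal.ofReal_sum_of_nonneg, ← hcoeff n]
    intro q _
    apply mul_nonneg (hpos q)
    rw [fpnc_coeff_X_pow_mul]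
    split
    · exact fpnc_coeff_pow_nonneg s hsnn _ _
    · exact le_rfl
  · rintro ⟨i, j⟩ hq
    simp only [Finset.mem_product, Finset.mem_range] at hq
    push_neg at hq
    simp only
    rw [fpnc_coeff_X_pow_mul]
    by_cases hin : i ≤ n
    · rw [if_pos hin, fpnc_coeff_pow_zero s hs0 j (n - i) (by omega)]
      simp
    · rw [if_neg hin]
      simp

/-- **Numerical convergence of the fixed-point iteration.**  Let `h ≥ 0` with `h(0,0) = 0`,
`h(0,1) = 0`, `S = ∑ s_n z^n` the formal power series solution with `s 0 = 0` of
`S = H(z,S)`, `α ≥ 0`, and assume `∑ s_n r^n` converges for some `r > α`.  Then the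
iteration `y 0 = 0`, `y (p+1) = ∑_{i,j} h(i,j) α^i (y p)^j` is well defined (each family
is summable) and converges to `S(α) = ∑ s_n α^n`. -/
theorem fixed_point_numerical_convergence (h : ℕ × ℕ → ℝ) (hpos : ∀ p, 0 ≤ h p)
    (h00 : h (0, 0) = 0) (h01 : h (0, 1) = 0)
    (s : ℕ → ℝ) (hs0 : s 0 = 0)
    (hfix : PowerSeries.mk s = mvSubst (toMv h) ![PowerSeries.X, PowerSeries.mk s])
    (α : ℝ) (hα : 0 ≤ α)
    (hr : ∃ r : ℝ, α < r ∧ Summable fun n : ℕ => s n * r ^ n)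
    (y : ℕ → ℝ) (hy0 : y 0 = 0)
    (hyrec : ∀ p : ℕ, y (p + 1) = ∑' q : ℕ × ℕ, h q * α ^ q.1 * y p ^ q.2) :
    (∀ p : ℕ, Summable fun q : ℕ × ℕ => h q * α ^ q.1 * y p ^ q.2) ∧
      Filter.Tendsto y Filter.atTop (nhds (∑' n : ℕ, s n * α ^ n)) := by
  obtain ⟨r, hαr, hsumr⟩ := hr
  have hcoeff := fpnc_hfix_coeff h s hfix
  have hsnn := fpnc_s_nonneg h hpos h01 s hs0 hcoeff
  have hsummα : Summable (fun n => s n * α ^ n) := by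
    refine Summable.of_nonneg_of_le (fun n => mul_nonneg (hsnn n) (pow_nonneg hα n))
      (fun n => ?_) hsumr
    exact mul_le_mul_of_nonneg_left (pow_le_pow_left₀ hα hαr.le n) (hsnn n)
  set A : ℝ := ∑' n : ℕ, s n * α ^ n with hAdef
  have hA0 : 0 ≤ A := tsum_nonneg fun n => mul_nonneg (hsnn n) (pow_nonneg hα n)
  have hTα : (∑' n : ℕ, ENNReal.ofReal (s n) * (ENNReal.ofReal α) ^ n) = ENNReal.ofReal A := by
    rw [hAdef, ENNReal.ofReal_tsum_of_nonneg
      (fun n => mul_nonneg (hsnn n) (pow_nonneg hα n)) hsummα]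
    exact tsum_congr fun n => by rw [ENNReal.ofReal_mul (hsnn n), ENNReal.ofReal_pow hα]
  have hGs := fpnc_G h hpos s hs0 hsnn hcoeff
  have hE : ∑' q : ℕ × ℕ, ENNReal.ofReal (h q) * (ENNReal.ofReal α) ^ q.1 *
      (ENNReal.ofReal A) ^ q.2 = ENNReal.ofReal A := by
    have hm := fpnc_master h s hsnn α hα
    rw [hTα] at hm
    rw [hm, ← hTα]
    exact tsum_congr fun n => by rw [hGs n, mul_comm]
  have hofq : ∀ t : ℝ, 0 ≤ t → ∀ q : ℕ × ℕ,
      ENNReal.ofReal (h q * α ^ q.1 * t ^ q.2)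
        = ENNReal.ofReal (h q) * (ENNReal.ofReal α) ^ q.1 * (ENNReal.ofReal t) ^ q.2 := by
    intro t ht q
    rw [ENNReal.ofReal_mul (mul_nonneg (hpos q) (pow_nonneg hα _)),
      ENNReal.ofReal_mul (hpos q), ENNReal.ofReal_pow hα, ENNReal.ofReal_pow ht]
  have htermnn : ∀ t : ℝ, 0 ≤ t → ∀ q : ℕ × ℕ, 0 ≤ h q * α ^ q.1 * t ^ q.2 := fun t ht q =>
    mul_nonneg (mul_nonneg (hpos q) (pow_nonneg hα _)) (pow_nonneg ht _)
  have hPhiE : ∀ t : ℝ, 0 ≤ t → t ≤ A →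
      (∑' q : ℕ × ℕ, ENNReal.ofReal (h q) * (ENNReal.ofReal α) ^ q.1 *
        (ENNReal.ofReal t) ^ q.2) ≤ ENNReal.ofReal A := by
    intro t ht htA
    refine le_trans (ENNReal.tsum_le_tsum fun q => ?_) (le_of_eq hE)
    exact mul_le_mul' le_rfl (pow_le_pow_left' (ENNReal.ofReal_le_ofReal htA) q.2)
  have hsummt : ∀ t : ℝ, 0 ≤ t → t ≤ A →
      Summable (fun q : ℕ × ℕ => h q * α ^ q.1 * t ^ q.2) := by
    intro t ht htA
    have hne : (∑' q : ℕ × ℕ, ENNReal.ofReal (h q * α ^ q.1 * t ^ q.2)) ≠ ⊤ := by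
      rw [tsum_congr (hofq t ht)]
      exact ((hPhiE t ht htA).trans_lt ENNReal.ofReal_lt_top).ne
    refine (ENNReal.summable_toReal hne).congr fun q => ?_
    rw [ENNReal.toReal_ofReal (htermnn t ht q)]
  have hPhiofReal : ∀ t : ℝ, 0 ≤ t → t ≤ A →
      ENNReal.ofReal (∑' q : ℕ × ℕ, h q * α ^ q.1 * t ^ q.2)
        = ∑' q : ℕ × ℕ, ENNReal.ofReal (h q) * (ENNReal.ofReal α) ^ q.1 *
            (ENNReal.ofReal t) ^ q.2 := by
    intro t ht htA
    rw [ENNReal.ofReal_tsum_of_nonneg (htermnn t ht) (hsummt t ht htA)]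
    exact tsum_congr (hofq t ht)
  have hPhinn : ∀ t : ℝ, 0 ≤ t → 0 ≤ ∑' q : ℕ × ℕ, h q * α ^ q.1 * t ^ q.2 := fun t ht =>
    tsum_nonneg (htermnn t ht)
  have hPhile : ∀ t : ℝ, 0 ≤ t → t ≤ A →
      (∑' q : ℕ × ℕ, h q * α ^ q.1 * t ^ q.2) ≤ A := by
    intro t ht htA
    have := hPhiE t ht htA
    rw [← hPhiofReal t ht htA] at this
    exact (ENNReal.ofReal_le_ofReal_iff hA0).mp this
  have hPhimono : ∀ t t' : ℝ, 0 ≤ t → t ≤ t' → t' ≤ A →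
      (∑' q : ℕ × ℕ, h q * α ^ q.1 * t ^ q.2) ≤ ∑' q : ℕ × ℕ, h q * α ^ q.1 * t' ^ q.2 := by
    intro t t' ht htt' ht'A
    refine Summable.tsum_le_tsum (fun q => ?_) (hsummt t ht (htt'.trans ht'A))
      (hsummt t' (ht.trans htt') ht'A)
    exact mul_le_mul_of_nonneg_left (pow_le_pow_left₀ ht htt' _)
      (mul_nonneg (hpos q) (pow_nonneg hα _))
  have hPhiA : (∑' q : ℕ × ℕ, h q * α ^ q.1 * A ^ q.2) = A := by
    have h1 : ENNReal.ofReal (∑' q : ℕ × ℕ, h q * α ^ q.1 * A ^ q.2) = ENNReal.ofReal A := by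
      rw [hPhiofReal A hA0 le_rfl, hE]
    have := congrArg ENNReal.toReal h1
    rwa [ENNReal.toReal_ofReal (hPhinn A hA0), ENNReal.toReal_ofReal hA0] at this
  have hyb : ∀ p, 0 ≤ y p ∧ y p ≤ A := by
    intro p
    induction p with
    | zero => rw [hy0]; exact ⟨le_rfl, hA0⟩
    | succ p ih =>
      rw [hyrec p]
      exact ⟨hPhinn (y p) ih.1, le_trans (hPhimono (y p) A ih.1 ih.2 le_rfl) (le_of_eq hPhiA)⟩
  refine ⟨fun p => hsummt (y p) (hyb p).1 (hyb p).2, ?_⟩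
  have hlow : ∀ p, (∑ n ∈ Finset.range (p + 1), s n * α ^ n) ≤ y p := by
    intro p
    induction p with
    | zero => simp [hy0, hs0]
    | succ p ih =>
      have hTp0 : 0 ≤ ∑ n ∈ Finset.range (p + 1), s n * α ^ n :=
        Finset.sum_nonneg fun n _ => mul_nonneg (hsnn n) (pow_nonneg hα n)
      have hTpA : (∑ n ∈ Finset.range (p + 1), s n * α ^ n) ≤ A :=
        Summable.sum_le_tsum _ (fun n _ => mul_nonneg (hsnn n) (pow_nonneg hα n)) hsummα
      set Tp : ℝ := ∑ n ∈ Finset.range (p + 1), s n * α ^ n with hTpdef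
      set t : ℕ → ℝ := fun k => if k ≤ p then s k else 0 with htdef
      have htnn : ∀ k, 0 ≤ t k := by
        intro k; rw [htdef]; dsimp only; split
        · exact hsnn k
        · exact le_rfl
      have ht0 : t 0 = 0 := by rw [htdef]; simp [hs0]
      have hTt : (∑' n : ℕ, ENNReal.ofReal (t n) * (ENNReal.ofReal α) ^ n)
          = ENNReal.ofReal Tp := by
        rw [tsum_eq_sum (s := Finset.range (p + 1)) (fun n hn => by
          simp only [Finset.mem_range] at hn
          rw [htdef]
          dsimp only
          rw [if_neg (by omega)]
          simp)]
        rw [hTpdef, ENNReal.ofReal_sum_of_nonneg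
          (fun n _ => mul_nonneg (hsnn n) (pow_nonneg hα n))]
        refine Finset.sum_congr rfl fun n hn => ?_
        simp only [Finset.mem_range] at hn
        rw [htdef]
        dsimp only
        rw [if_pos (by omega), ENNReal.ofReal_mul (hsnn n), ENNReal.ofReal_pow hα]
      have hGt : ∀ n ≤ p + 1,
          (∑' q : ℕ × ℕ, ENNReal.ofReal (h q) * ENNReal.ofReal (PowerSeries.coeff n
            (PowerSeries.X ^ q.1 * (PowerSeries.mk t) ^ q.2))) = ENNReal.ofReal (s n) := by
        intro n hn
        rw [← hGs n]
        refine tsum_congr fun q => ?_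
        by_cases hq01 : q = (0, 1)
        · rw [hq01, h01]
          simp
        · congr 2
          rw [fpnc_coeff_X_pow_mul, fpnc_coeff_X_pow_mul]
          split
          · next hin =>
            rcases Nat.eq_zero_or_pos q.2 with hj | hj
            · rw [hj, pow_zero, pow_zero]
            · have hq2 : ¬(q.1 = 0 ∧ q.2 = 1) := by
                intro ⟨ha, hb⟩
                exact hq01 (Prod.ext ha hb)
              refine fpnc_coeff_pow_congr t s ht0 hs0 p (fun k hk => by
                rw [htdef]; dsimp only; rw [if_pos hk]) q.2 (n - q.1) hj (by omega)
          · rfl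
      have key : (∑ n ∈ Finset.range (p + 2), s n * α ^ n)
          ≤ ∑' q : ℕ × ℕ, h q * α ^ q.1 * Tp ^ q.2 := by
        have hm := fpnc_master h t htnn α hα
        rw [hTt] at hm
        have h2 : ENNReal.ofReal (∑ n ∈ Finset.range (p + 2), s n * α ^ n)
            ≤ ENNReal.ofReal (∑' q : ℕ × ℕ, h q * α ^ q.1 * Tp ^ q.2) := by
          rw [hPhiofReal Tp hTp0 hTpA, hm]
          calc ENNReal.ofReal (∑ n ∈ Finset.range (p + 2), s n * α ^ n)
              = ∑ n ∈ Finset.range (p + 2), (ENNReal.ofReal α) ^ n *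
                  (∑' q : ℕ × ℕ, ENNReal.ofReal (h q) * ENNReal.ofReal (PowerSeries.coeff n
                    (PowerSeries.X ^ q.1 * (PowerSeries.mk t) ^ q.2))) := by
                rw [ENNReal.ofReal_sum_of_nonneg
                  (fun n _ => mul_nonneg (hsnn n) (pow_nonneg hα n))]
                refine Finset.sum_congr rfl fun n hn => ?_
                simp only [Finset.mem_range] at hn
                rw [hGt n (by omega), ENNReal.ofReal_mul (hsnn n), ENNReal.ofReal_pow hα,
                  mul_comm]
            _ ≤ ∑' n : ℕ, (ENNReal.ofReal α) ^ n *
                  (∑' q : ℕ × ℕ, ENNReal.ofReal (h q) * ENNReal.ofReal (PowerSeries.coeff n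
                    (PowerSeries.X ^ q.1 * (PowerSeries.mk t) ^ q.2))) :=
                ENNReal.sum_le_tsum _
        exact (ENNReal.ofReal_le_ofReal_iff (hPhinn Tp hTp0)).mp h2
      calc ∑ n ∈ Finset.range (p + 1 + 1), s n * α ^ n
          ≤ ∑' q : ℕ × ℕ, h q * α ^ q.1 * Tp ^ q.2 := key
        _ ≤ ∑' q : ℕ × ℕ, h q * α ^ q.1 * (y p) ^ q.2 := hPhimono Tp (y p) hTp0 ih (hyb p).2
        _ = y (p + 1) := (hyrec p).symm
  have h1 : Filter.Tendsto (fun p => ∑ n ∈ Finset.range (p + 1), s n * α ^ n)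
      Filter.atTop (nhds A) := by
    have h2 := hsummα.hasSum.tendsto_sum_nat
    exact h2.comp (Filter.tendsto_add_atTop_nat 1)
  exact tendsto_of_tendsto_of_tendsto_of_le_of_le h1 tendsto_const_nhds hlow fun p => (hyb p).2
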